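/- For every real I > 0 with I ≠ 1, the spiking period of the square-root phase model (Sqrt-IF*) with threshold 1 and reset −1 satisfies ∫_{−1}^{1} dy / ((1−I)·√|y| + I) = 4·(1 + I·(log I − 1))/(1 − I)²; equivalently its firing rate is r(I) = (1/4)·(I − 1)² / (1 + I·(log I − 1)). -/

import Mathlib

open Real intervalIntegral

lemma denom_pos (I : ℝ) (hI : 0 < I) {s : ℝ} (h0 : 0 ≤ s) (h1 : s ≤ 1) :
    0 < (1 - I) * s + I := by
  nlinarith [mul_nonneg hI.le (by linarith : (0:ℝ) ≤ 1 - s)]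

lemma denom_pos' (I : ℝ) (hI : 0 < I) {y : ℝ} (h : y ∈ Set.Icc (-1:ℝ) 1) :
    0 < (1 - I) * Real.sqrt |y| + I := by
  apply denom_pos I hI (Real.sqrt_nonneg _)
  rw [show (1:ℝ) = Real.sqrt 1 by simp]
  exact Real.sqrt_le_sqrt (abs_le.2 ⟨h.1, h.2⟩)

lemma cont_f (I : ℝ) (hI : 0 < I) :
    ContinuousOn (fun y : ℝ => 1 / ((1 - I) * Real.sqrt |y| + I)) (Set.Icc (-1:ℝ) 1) := by
  apply ContinuousOn.div continuousOn_const
  · exact (Continuous.add (continuous_const.mul (Real.continuous_sqrt.comp continuous_abs))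
      continuous_const).continuousOn
  · exact fun y hy => (denom_pos' I hI hy).ne'

lemma integrable_f (I : ℝ) (hI : 0 < I) {a b : ℝ} (ha : -1 ≤ a) (hb : b ≤ 1) (hab : a ≤ b) :
    IntervalIntegrable (fun y : ℝ => 1 / ((1 - I) * Real.sqrt |y| + I)) MeasureTheory.volume a b :=
  ((cont_f I hI).mono (Set.Icc_subset_Icc ha hb)).intervalIntegrable_of_Icc hab

lemma half_integral (I : ℝ) (hI : 0 < I) (hI1 : I ≠ 1) :
    ∫ y in (0:ℝ)..1, 1 / ((1 - I) * Real.sqrt |y| + I)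
      = 2 / (1 - I) + 2 * I * Real.log I / (1 - I) ^ 2 := by
  have ha : (1 - I) ≠ 0 := sub_ne_zero.2 (Ne.symm hI1)
  set a : ℝ := 1 - I with ha_def
  set F : ℝ → ℝ := fun y => (2 / a) * Real.sqrt y - (2 * I / a ^ 2) * Real.log (a * Real.sqrt y + I)
    with hF
  have hpos : ∀ y ∈ Set.Icc (0:ℝ) 1, 0 < a * Real.sqrt y + I := by
    intro y hy
    apply denom_pos I hI (Real.sqrt_nonneg _)
    rw [show (1:ℝ) = Real.sqrt 1 by simp]
    exact Real.sqrt_le_sqrt hy.2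
  have key : ∫ y in (0:ℝ)..1, 1 / (a * Real.sqrt y + I) = F 1 - F 0 := by
    apply intervalIntegral.integral_eq_sub_of_hasDeriv_right_of_le (by norm_num)
    · -- continuity of F on Icc 0 1
      apply ContinuousOn.sub
      · exact continuousOn_const.mul (Real.continuous_sqrt.continuousOn)
      · apply continuousOn_const.mul
        apply ContinuousOn.log
        · exact (continuous_const.mul Real.continuous_sqrt).continuousOn.add continuousOn_const
        · exact fun y hy => (hpos y hy).ne'
    · intro y hy
      have hy0 : 0 < y := hy.1
      have hs : 0 < Real.sqrt y := Real.sqrt_pos.2 hy0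
      have hd : 0 < a * Real.sqrt y + I := hpos y ⟨hy.1.le, hy.2.le⟩
      have h1 : HasDerivAt Real.sqrt (1 / (2 * Real.sqrt y)) y := Real.hasDerivAt_sqrt hy0.ne'
      have h2 : HasDerivAt (fun y => a * Real.sqrt y + I) (a * (1 / (2 * Real.sqrt y))) y :=
        ((h1.const_mul a).add_const I)
      have h3 : HasDerivAt (fun y => Real.log (a * Real.sqrt y + I))
          ((a * (1 / (2 * Real.sqrt y))) / (a * Real.sqrt y + I)) y := by
        have := (Real.hasDerivAt_log hd.ne').comp y h2
        rw [show a * (1 / (2 * Real.sqrt y)) / (a * Real.sqrt y + I)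
          = (a * Real.sqrt y + I)⁻¹ * (a * (1 / (2 * Real.sqrt y))) by ring]
        exact this
      have h4 : HasDerivAt F
          ((2 / a) * (1 / (2 * Real.sqrt y))
            - (2 * I / a ^ 2) * ((a * (1 / (2 * Real.sqrt y))) / (a * Real.sqrt y + I))) y :=
        (h1.const_mul (2 / a)).sub (h3.const_mul (2 * I / a ^ 2))
      have heq : (2 / a) * (1 / (2 * Real.sqrt y))
            - (2 * I / a ^ 2) * ((a * (1 / (2 * Real.sqrt y))) / (a * Real.sqrt y + I))
          = 1 / (a * Real.sqrt y + I) := by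
        field_simp
        ring
      rw [heq] at h4
      exact h4.hasDerivWithinAt
    · -- integrability
      apply ContinuousOn.intervalIntegrable_of_Icc (by norm_num)
      apply ContinuousOn.div continuousOn_const
      · exact ((continuous_const.mul Real.continuous_sqrt).add continuous_const).continuousOn
      · exact fun y hy => (hpos y hy).ne'
  have hcong : ∫ y in (0:ℝ)..1, 1 / ((1 - I) * Real.sqrt |y| + I)
      = ∫ y in (0:ℝ)..1, 1 / (a * Real.sqrt y + I) := by
    apply intervalIntegral.integral_congr
    intro y hy
    rw [Set.uIcc_of_le (by norm_num : (0:ℝ) ≤ 1)] at hy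
    simp only [abs_of_nonneg hy.1, ha_def]
  rw [hcong, key, hF]
  simp only [Real.sqrt_one, Real.sqrt_zero]
  rw [show a * 1 + I = 1 by rw [ha_def]; ring, show a * 0 + I = I by ring, Real.log_one]
  field_simp
  ring

/-- For every real `I > 0` with `I ≠ 1`, the spiking period of
the square-root phase model (Sqrt-IF*) with threshold `1` and reset `-1`
satisfies
`∫ y in -1..1, 1 / ((1 - I) * √|y| + I) = 4 * (1 + I * (log I - 1)) / (1 - I)^2`;
equivalently its firing rate is
`r I = (1/4) * (I - 1)^2 / (1 + I * (log I - 1))`. -/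
theorem sqrt_IF_star_period (I : ℝ) (hI : 0 < I) (hI1 : I ≠ 1) :
    ∫ y in (-1 : ℝ)..1, 1 / ((1 - I) * Real.sqrt |y| + I)
      = 4 * (1 + I * (Real.log I - 1)) / (1 - I) ^ 2 := by
  have ha : (1 - I) ≠ 0 := sub_ne_zero.2 (Ne.symm hI1)
  have hsplit : ∫ y in (-1 : ℝ)..1, 1 / ((1 - I) * Real.sqrt |y| + I)
      = (∫ y in (-1:ℝ)..0, 1 / ((1 - I) * Real.sqrt |y| + I))
        + ∫ y in (0:ℝ)..1, 1 / ((1 - I) * Real.sqrt |y| + I) :=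
    (intervalIntegral.integral_add_adjacent_intervals
      (integrable_f I hI (by norm_num) (by norm_num) (by norm_num))
      (integrable_f I hI (by norm_num) (by norm_num) (by norm_num))).symm
  have hneg : (∫ y in (-1:ℝ)..0, 1 / ((1 - I) * Real.sqrt |y| + I))
      = ∫ y in (0:ℝ)..1, 1 / ((1 - I) * Real.sqrt |y| + I) := by
    rw [show (-1:ℝ) = -(1:ℝ) by norm_num, show (0:ℝ) = -(0:ℝ) by norm_num,
      ← intervalIntegral.integral_comp_neg (fun y => 1 / ((1 - I) * Real.sqrt |y| + I))]
    simp [abs_neg]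
  rw [hsplit, hneg, half_integral I hI hI1]
  field_simp
  ring
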